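/- arXiv:1606.09193 — 6 statements merged into one kernel-verified Lean document; each statement's English description precedes it below -/
import Mathlib

section
/- Let X ∈ ℝ^{n×p}, let T₀ ⊆ {1,…,p} with |T₀| ≤ s₀, and suppose that for some constant C with 0 < C < 1, every h ∈ ker X satisfies ‖h_{T₀}‖₂ ≤ C·‖h_{T₀ᶜ}‖₁/√s₀. Let β ∈ ℝ^p be supported on T₀ (i.e., β_j = 0 for all j ∉ T₀), set y = Xβ, and let β̂ be any minimizer of ‖b‖₁ over {b ∈ ℝ^p : Xb = y}. Then β̂ = β. -/
open Matrix

/-- **The Null Space Property implies exact recovery by Basis Pursuit.**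
If every `h ∈ ker X` satisfies `‖h_{T₀}‖₂ ≤ C ‖h_{T₀ᶜ}‖₁/√s₀` with `0 < C < 1`,
`β` is supported on `T₀` with `|T₀| ≤ s₀`, `y = Xβ`, and `β̂` minimizes the `ℓ1` norm
among all solutions of `Xb = y`, then `β̂ = β`. -/
theorem nsp_implies_exact_recovery
    {n p : ℕ} (X : Matrix (Fin n) (Fin p) ℝ) (s₀ : ℕ) (T₀ : Finset (Fin p))
    (hT₀ : T₀.card ≤ s₀)
    (C : ℝ) (hC0 : 0 < C) (hC1 : C < 1)
    (hNSP : ∀ h : Fin p → ℝ, X.mulVec h = 0 →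
      Real.sqrt (∑ j ∈ T₀, h j ^ 2) ≤ C * (∑ j ∈ T₀ᶜ, |h j|) / Real.sqrt s₀)
    (β : Fin p → ℝ) (hβ : ∀ j, j ∉ T₀ → β j = 0)
    (βhat : Fin p → ℝ)
    (hfeas : X.mulVec βhat = X.mulVec β)
    (hmin : ∀ b : Fin p → ℝ, X.mulVec b = X.mulVec β → ∑ j, |βhat j| ≤ ∑ j, |b j|) :
    βhat = β := by
  set h : Fin p → ℝ := fun j => βhat j - β j with hh
  have hker : X.mulVec h = 0 := by
    have := X.mulVec_sub βhat β
    rw [hfeas, sub_self] at this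
    exact this
  -- minimality at β
  have hle : ∑ j, |βhat j| ≤ ∑ j, |β j| := hmin β rfl
  -- split sums over T₀ and T₀ᶜ
  have hsplit : ∀ f : Fin p → ℝ, ∑ j, f j = ∑ j ∈ T₀, f j + ∑ j ∈ T₀ᶜ, f j := by
    intro f
    rw [← Finset.sum_add_sum_compl T₀]
  have hβc : ∑ j ∈ T₀ᶜ, |β j| = 0 := by
    apply Finset.sum_eq_zero
    intro j hj
    simp [hβ j (Finset.mem_compl.mp hj)]
  have hkey : ∑ j ∈ T₀ᶜ, |h j| ≤ ∑ j ∈ T₀, |h j| := by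
    have h1 : ∑ j ∈ T₀, |β j| - ∑ j ∈ T₀, |h j| ≤ ∑ j ∈ T₀, |βhat j| := by
      rw [sub_le_iff_le_add, ← Finset.sum_add_distrib]
      apply Finset.sum_le_sum
      intro j _
      have : |β j| ≤ |βhat j| + |βhat j - β j| := by
        calc |β j| = |βhat j - (βhat j - β j)| := by ring_nf
          _ ≤ |βhat j| + |βhat j - β j| := abs_sub _ _
      simpa [hh] using this
    have h2 : ∑ j ∈ T₀ᶜ, |βhat j| = ∑ j ∈ T₀ᶜ, |h j| := by
      apply Finset.sum_congr rfl
      intro j hj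
      simp [hh, hβ j (Finset.mem_compl.mp hj)]
    have h3 := hle
    rw [hsplit (fun j => |βhat j|), hsplit (fun j => |β j|), hβc, h2] at h3
    linarith
  -- the case s₀ = 0
  rcases Nat.eq_zero_or_pos s₀ with hs0 | hs0
  · have hT0 : T₀ = ∅ := Finset.card_eq_zero.mp (Nat.le_zero.mp (hs0 ▸ hT₀))
    have : ∑ j ∈ T₀ᶜ, |h j| ≤ 0 := by simpa [hT0] using hkey
    have hzero : ∀ j, h j = 0 := by
      intro j
      have := (Finset.sum_eq_zero_iff_of_nonneg (fun j _ => abs_nonneg (h j))).mp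
        (le_antisymm this (Finset.sum_nonneg fun j _ => abs_nonneg (h j))) j
        (by simp [hT0])
      exact abs_eq_zero.mp this
    funext j
    have := hzero j
    simp only [hh] at this
    linarith
  -- s₀ > 0 : Cauchy–Schwarz
  have hs0' : (0 : ℝ) < Real.sqrt s₀ := Real.sqrt_pos.mpr (by exact_mod_cast hs0)
  have hCS : ∑ j ∈ T₀, |h j| ≤ Real.sqrt s₀ * Real.sqrt (∑ j ∈ T₀, h j ^ 2) := by
    have hcs := Finset.sum_mul_sq_le_sq_mul_sq T₀ (fun _ => (1 : ℝ)) (fun j => |h j|)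
    simp only [one_mul, one_pow, sq_abs, Finset.sum_const, nsmul_eq_mul, mul_one] at hcs
    have h1 : ∑ j ∈ T₀, |h j| ≤ Real.sqrt ((T₀.card : ℝ) * ∑ j ∈ T₀, h j ^ 2) := by
      rw [Real.le_sqrt (Finset.sum_nonneg fun j _ => abs_nonneg _)
        (by positivity)]
      exact hcs
    calc ∑ j ∈ T₀, |h j|
        ≤ Real.sqrt ((T₀.card : ℝ) * ∑ j ∈ T₀, h j ^ 2) := h1
      _ = Real.sqrt (T₀.card : ℝ) * Real.sqrt (∑ j ∈ T₀, h j ^ 2) := by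
          rw [Real.sqrt_mul (by positivity)]
      _ ≤ Real.sqrt s₀ * Real.sqrt (∑ j ∈ T₀, h j ^ 2) := by
          apply mul_le_mul_of_nonneg_right _ (Real.sqrt_nonneg _)
          exact Real.sqrt_le_sqrt (by exact_mod_cast hT₀)
  have hNSPh := hNSP h hker
  set A := ∑ j ∈ T₀ᶜ, |h j| with hA
  have hAnn : 0 ≤ A := Finset.sum_nonneg fun j _ => abs_nonneg _
  have hchain : A ≤ C * A := by
    calc A ≤ ∑ j ∈ T₀, |h j| := hkey
      _ ≤ Real.sqrt s₀ * Real.sqrt (∑ j ∈ T₀, h j ^ 2) := hCS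
      _ ≤ Real.sqrt s₀ * (C * A / Real.sqrt s₀) := by
          exact mul_le_mul_of_nonneg_left hNSPh (Real.sqrt_nonneg _)
      _ = C * A := by field_simp
  have hA0 : A = 0 := by nlinarith
  have hcompl : ∀ j ∈ T₀ᶜ, h j = 0 := by
    intro j hj
    have := (Finset.sum_eq_zero_iff_of_nonneg (fun j _ => abs_nonneg (h j))).mp hA0 j hj
    exact abs_eq_zero.mp this
  have hsq0 : ∑ j ∈ T₀, h j ^ 2 = 0 := by
    have h1 : Real.sqrt (∑ j ∈ T₀, h j ^ 2) ≤ 0 := by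
      rw [hA0] at hNSPh; simpa using hNSPh
    have h2 : 0 ≤ ∑ j ∈ T₀, h j ^ 2 := Finset.sum_nonneg fun j _ => sq_nonneg _
    nlinarith [Real.sq_sqrt h2, Real.sqrt_nonneg (∑ j ∈ T₀, h j ^ 2)]
  have hins : ∀ j ∈ T₀, h j = 0 := by
    intro j hj
    have := (Finset.sum_eq_zero_iff_of_nonneg (fun j _ => sq_nonneg (h j))).mp hsq0 j hj
    exact pow_eq_zero_iff (by norm_num) |>.mp this
  funext j
  have : h j = 0 := by
    by_cases hj : j ∈ T₀
    · exact hins j hj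
    · exact hcompl j (Finset.mem_compl.mpr hj)
  simp only [hh] at this
  linarith
end

section
/- Let X ∈ ℝ^{n×p} have ℓ2-normalized columns and coherence μ. Let T₀ ⊆ {1,…,p} with |T₀| = s₀ and let λ₁ be the largest eigenvalue of X_{T₀}X_{T₀}ᵗ. Let λ̃₁ be any number with λ̃₁ ≥ λ₁ and λ̃₁ > 1, and let j ∉ T₀. Then the largest eigenvalue of X_{T₀}X_{T₀}ᵗ + X_jX_jᵗ satisfies λ₁(X_{T₀}X_{T₀}ᵗ + X_jX_jᵗ) ≤ λ̃₁ + ε_{s₀,max}, where ε_{s₀,max} = (1/2)·( (s₀³·μ²·‖X_{T₀}‖² + 4·s₀^{3/2}·μ·‖X_{T₀}‖·λ̃₁) / (2·(λ̃₁ − 1)) ). -/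
open Matrix

/-- The `ℓ2 → ℓ2` operator norm of a matrix. -/
noncomputable def opNorm {m n : Type*} [Fintype m] [Fintype n] [DecidableEq n]
    (A : Matrix m n ℝ) : ℝ :=
  ‖LinearMap.toContinuousLinearMap (Matrix.toEuclideanLin A)‖

/-- The submatrix of `X` made of the columns indexed by `T`. -/
noncomputable def subCols {n p : ℕ} (X : Matrix (Fin n) (Fin p) ℝ) (T : Finset (Fin p)) :
    Matrix (Fin n) {j // j ∈ T} ℝ :=
  X.submatrix id (fun t => (t : Fin p))

theorem vecMulVec_isHermitian {n : ℕ} (v : Fin n → ℝ) : (Matrix.vecMulVec v v).IsHermitian := by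
  ext i j
  simp [Matrix.vecMulVec, Matrix.conjTranspose_apply, mul_comm]

/-- `X_{T₀}X_{T₀}ᵗ + vvᵗ` is Hermitian. -/
theorem pertM_isHermitian {n p : ℕ} (X : Matrix (Fin n) (Fin p) ℝ) (T₀ : Finset (Fin p))
    (v : Fin n → ℝ) :
    (subCols X T₀ * (subCols X T₀)ᴴ + Matrix.vecMulVec v v).IsHermitian :=
  (Matrix.isHermitian_mul_conjTranspose_self _).add (vecMulVec_isHermitian v)

/-- The `k`-th largest eigenvalue (`k` counted from 1) of a Hermitian real matrix. -/
noncomputable def kthLargestEig {ι : Type*} [Fintype ι] [DecidableEq ι]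
    {M : Matrix ι ι ℝ} (hM : M.IsHermitian) (k : ℕ) : ℝ :=
  ((Finset.univ.val.map hM.eigenvalues).sort (· ≤ ·)).getD (Fintype.card ι - k) 0

lemma kthLargestEig_le {ι : Type*} [Fintype ι] [DecidableEq ι]
    {M : Matrix ι ι ℝ} (hM : M.IsHermitian) {c : ℝ} (h0 : 0 ≤ c)
    (h : ∀ i, hM.eigenvalues i ≤ c) (k : ℕ) : kthLargestEig hM k ≤ c := by
  unfold kthLargestEig
  rcases lt_or_ge (Fintype.card ι - k)
      ((Finset.univ.val.map hM.eigenvalues).sort (· ≤ ·)).length with hlen | hlen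
  · rw [List.getD_eq_getElem?_getD, List.getElem?_eq_getElem hlen]
    have hmem := List.getElem_mem hlen
    have h2 := (Multiset.mem_sort (α := ℝ) (· ≤ ·)).mp hmem
    rcases Multiset.mem_map.mp h2 with ⟨i, _, hi⟩
    simpa [← hi] using h i
  · rw [List.getD_eq_getElem?_getD, List.getElem?_eq_none hlen]
    simpa using h0

lemma one_le_opNorm_subCols {n p : ℕ} (X : Matrix (Fin n) (Fin p) ℝ)
    (hcols : ∀ j, ∑ i, (X i j) ^ 2 = 1)
    {T₀ : Finset (Fin p)} (hne : T₀.Nonempty) : 1 ≤ opNorm (subCols X T₀) := by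
  obtain ⟨t₀, ht₀⟩ := hne
  set T := LinearMap.toContinuousLinearMap (Matrix.toEuclideanLin (subCols X T₀)) with hT
  set x : EuclideanSpace ℝ {j // j ∈ T₀} := EuclideanSpace.single ⟨t₀, ht₀⟩ 1 with hx
  have hxn : ‖x‖ = 1 := by rw [hx, EuclideanSpace.norm_single]; norm_num
  have hTx : ‖T x‖ = 1 := by
    have happ : ∀ i, (T x) i = X i t₀ := by
      intro i
      show (subCols X T₀ *ᵥ (Pi.single ⟨t₀, ht₀⟩ 1 : {j // j ∈ T₀} → ℝ)) i = X i t₀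
      rw [Matrix.mulVec_single]
      simp [subCols, Matrix.submatrix_apply]
    rw [EuclideanSpace.norm_eq]
    have : ∑ i, ‖(T x) i‖ ^ 2 = 1 := by
      rw [← hcols t₀]
      exact Finset.sum_congr rfl fun i _ => by rw [happ i, Real.norm_eq_abs, sq_abs]
    rw [this, Real.sqrt_one]
  have hle := T.le_opNorm x
  rw [hTx, hxn, mul_one] at hle
  exact hle

lemma secular_bound {n : ℕ} {A : Matrix (Fin n) (Fin n) ℝ} (hA : A.IsHermitian)
    (hA0 : ∀ i, 0 ≤ hA.eigenvalues i)
    {v : Fin n → ℝ} (hv : ∑ i, v i ^ 2 = 1)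
    (hM : (A + Matrix.vecMulVec v v).IsHermitian)
    (i₀ : Fin n) {lam1 tlam1 d : ℝ}
    (hup : ∀ i, hA.eigenvalues i ≤ lam1) (h1 : lam1 ≤ tlam1) (h2 : 1 < tlam1)
    (hδ : ∑ k, v k * (A *ᵥ v) k ≤ d) (hd0 : 0 ≤ d) :
    hM.eigenvalues i₀ ≤ tlam1 + d / (tlam1 - 1) := by
  set lam := hM.eigenvalues i₀ with hlamdef
  rcases le_or_gt lam tlam1 with hcase | hcase
  · have : 0 ≤ d / (tlam1 - 1) := div_nonneg hd0 (by linarith)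
    linarith
  set e : Fin n → EuclideanSpace ℝ (Fin n) := fun i => hA.eigenvectorBasis i with he
  set u : EuclideanSpace ℝ (Fin n) := hM.eigenvectorBasis i₀ with hu
  set a : Fin n → ℝ := hA.eigenvalues with ha
  set b : Fin n → ℝ := fun i => ∑ k, e i k * v k with hb
  set c : Fin n → ℝ := fun i => ∑ k, e i k * u k with hc
  set t : ℝ := ∑ k, v k * u k with ht
  have hinner : ∀ x y : EuclideanSpace ℝ (Fin n), (inner ℝ x y : ℝ) = ∑ k, x k * y k := by
    intro x y; simp [PiLp.inner_apply, RCLike.inner_apply, mul_comm]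
  have hApos : ∀ i, lam - a i > 0 := fun i => by have := hup i; simp only [ha]; linarith
  have hAsymm : ∀ k l, A k l = A l k := by
    intro k l
    conv_lhs => rw [← hA]
    simp [Matrix.conjTranspose_apply]
  have hAdot : ∀ (i : Fin n) (w : Fin n → ℝ),
      ∑ k, e i k * (A *ᵥ w) k = a i * ∑ k, e i k * w k := by
    intro i w
    have hAe : ∀ l, (A *ᵥ (e i : Fin n → ℝ)) l = a i * e i l := by
      intro l
      have h0 := congrFun (hA.mulVec_eigenvectorBasis i) l
      simpa using h0
    calc ∑ k, e i k * (A *ᵥ w) k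
        = ∑ k, ∑ l, e i k * (A k l * w l) := by
          simp [Matrix.mulVec, dotProduct, Finset.mul_sum]
      _ = ∑ l, (∑ k, A l k * e i k) * w l := by
          rw [Finset.sum_comm]
          refine Finset.sum_congr rfl fun l _ => ?_
          rw [Finset.sum_mul]
          refine Finset.sum_congr rfl fun k _ => ?_
          rw [hAsymm k l]; ring
      _ = ∑ l, (a i * e i l) * w l := by
          refine Finset.sum_congr rfl fun l _ => ?_
          have := hAe l
          simp only [Matrix.mulVec, dotProduct] at this
          rw [this]
      _ = a i * ∑ k, e i k * w k := by
          rw [Finset.mul_sum]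
          exact Finset.sum_congr rfl fun l _ => by ring
  have hcoe : ∀ x : EuclideanSpace ℝ (Fin n), (WithLp.equiv 2 (Fin n → ℝ)) x = x :=
    fun _ => rfl
  have hMu : ∀ k, (A *ᵥ (u : Fin n → ℝ)) k + v k * t = lam * u k := by
    intro k
    have hvv : (Matrix.vecMulVec v v *ᵥ (u : Fin n → ℝ)) k = v k * t := by
      simp [Matrix.vecMulVec_apply, Matrix.mulVec, dotProduct, Finset.mul_sum, mul_assoc, ht]
    have h0 := congrFun (hM.mulVec_eigenvectorBasis i₀) k
    rw [← hu, ← hlamdef, Matrix.add_mulVec] at h0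
    simp only [Pi.add_apply, Pi.smul_apply, smul_eq_mul] at h0
    rw [← h0, hvv]
  have key : ∀ i, c i * (lam - a i) = t * b i := by
    intro i
    have h1' : ∑ k, e i k * (lam * u k) = a i * c i + t * b i := by
      calc ∑ k, e i k * (lam * u k)
          = ∑ k, (e i k * (A *ᵥ (u : Fin n → ℝ)) k + e i k * (v k * t)) := by
            refine Finset.sum_congr rfl fun k _ => ?_
            rw [← hMu k]; ring
        _ = (∑ k, e i k * (A *ᵥ (u : Fin n → ℝ)) k) + ∑ k, e i k * (v k * t) := by
            rw [Finset.sum_add_distrib]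
        _ = a i * c i + t * b i := by
            rw [hAdot i u]
            congr 1
            simp only [hb]
            rw [Finset.mul_sum]
            exact Finset.sum_congr rfl fun k _ => by ring
    have h2' : ∑ k, e i k * (lam * u k) = lam * c i := by
      simp only [hc]
      rw [Finset.mul_sum]
      exact Finset.sum_congr rfl fun k _ => by ring
    rw [h2'] at h1'
    linarith [h1']
  have P := fun x y => (hA.eigenvectorBasis.sum_inner_mul_inner x y : _)
  have hcc : ∑ i, c i ^ 2 = 1 := by
    have h0 := P u u
    have hun : ‖u‖ = 1 := hM.eigenvectorBasis.orthonormal.1 i₀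
    rw [real_inner_self_eq_norm_sq, hun] at h0
    rw [one_pow] at h0
    rw [← h0]
    refine Finset.sum_congr rfl fun i _ => ?_
    rw [hinner u (e i), hinner (e i) u]
    simp only [hc]
    have h3 : ∑ k, u k * e i k = ∑ k, e i k * u k :=
      Finset.sum_congr rfl fun k _ => by ring
    rw [h3]; ring
  have hbb : ∑ i, b i ^ 2 = 1 := by
    have h0 := P ((WithLp.equiv 2 _).symm v) ((WithLp.equiv 2 _).symm v)
    rw [hinner ((WithLp.equiv 2 _).symm v) ((WithLp.equiv 2 _).symm v)] at h0
    have h1' : (∑ k, ((WithLp.equiv 2 (Fin n → ℝ)).symm v) k *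
        ((WithLp.equiv 2 (Fin n → ℝ)).symm v) k) = 1 := by
      rw [← hv]; exact Finset.sum_congr rfl fun k _ => by
        simp only [WithLp.equiv_symm_apply, PiLp.toLp_apply]; ring
    rw [h1'] at h0
    rw [← h0]
    refine Finset.sum_congr rfl fun i _ => ?_
    rw [hinner, hinner]
    simp only [hb, WithLp.equiv_symm_apply, PiLp.toLp_apply]
    have h3 : ∑ k, v k * e i k = ∑ k, e i k * v k :=
      Finset.sum_congr rfl fun k _ => by ring
    rw [h3]; ring
  have hbc : ∑ i, b i * c i = t := by
    have h0 := P ((WithLp.equiv 2 _).symm v) u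
    rw [hinner ((WithLp.equiv 2 _).symm v) u] at h0
    have h1' : (∑ k, ((WithLp.equiv 2 (Fin n → ℝ)).symm v) k * u k) = t := by
      simp only [ht]; exact Finset.sum_congr rfl fun k _ => by
        simp only [WithLp.equiv_symm_apply, PiLp.toLp_apply]
    rw [h1'] at h0
    rw [← h0]
    refine Finset.sum_congr rfl fun i _ => ?_
    rw [hinner, hinner]
    simp only [hb, hc, WithLp.equiv_symm_apply, PiLp.toLp_apply]
    have h3 : ∑ k, v k * e i k = ∑ k, e i k * v k :=
      Finset.sum_congr rfl fun k _ => by ring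
    rw [h3]
  have habb : ∑ i, a i * b i ^ 2 = ∑ k, v k * (A *ᵥ v) k := by
    have h0 := P ((WithLp.equiv 2 _).symm v) ((WithLp.equiv 2 _).symm (A *ᵥ v))
    rw [hinner ((WithLp.equiv 2 _).symm v) ((WithLp.equiv 2 _).symm (A *ᵥ v))] at h0
    have hrhs : (∑ k, ((WithLp.equiv 2 (Fin n → ℝ)).symm v) k *
        ((WithLp.equiv 2 (Fin n → ℝ)).symm (A *ᵥ v)) k) = ∑ k, v k * (A *ᵥ v) k :=
      Finset.sum_congr rfl fun k _ => by
        simp only [WithLp.equiv_symm_apply, PiLp.toLp_apply]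
    rw [hrhs] at h0
    rw [← h0]
    refine Finset.sum_congr rfl fun i _ => ?_
    rw [hinner, hinner]
    simp only [WithLp.equiv_symm_apply, PiLp.toLp_apply]
    have h3 : ∑ k, v k * e i k = b i := by
      simp only [hb]; exact Finset.sum_congr rfl fun k _ => by ring
    rw [h3, hAdot i v]
    simp only [hb]
    ring
  rcases eq_or_ne t 0 with ht0 | ht0
  · exfalso
    have hc0 : ∀ i, c i = 0 := by
      intro i
      have hk := key i
      rw [ht0, zero_mul] at hk
      rcases mul_eq_zero.mp hk with h | h
      · exact h
      · exact absurd h (by have := hApos i; linarith)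
    have : ∑ i, c i ^ 2 = 0 := Finset.sum_eq_zero fun i _ => by rw [hc0 i]; ring
    rw [hcc] at this; norm_num at this
  have habs : 0 < |t| := abs_pos.mpr ht0
  set D : ℝ := lam - lam1 with hD
  have hD0 : 0 < D := by simp only [hD]; linarith
  set δ : ℝ := ∑ k, v k * (A *ᵥ v) k with hδdef
  have hδ0 : 0 ≤ δ := by
    rw [← habb]
    exact Finset.sum_nonneg fun i _ => mul_nonneg (hA0 i) (sq_nonneg _)
  have hper : ∀ i, |a i * (b i * c i)| ≤ |t| * (a i * b i ^ 2) / D := by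
    intro i
    have hpi := hApos i
    have hci : c i = t * b i / (lam - a i) := by
      field_simp
      linarith [key i]
    have heq : a i * (b i * c i) = t * (a i * b i ^ 2) / (lam - a i) := by
      rw [hci]; field_simp
    rw [heq, abs_div, abs_of_pos hpi, abs_mul,
      abs_of_nonneg (mul_nonneg (hA0 i) (sq_nonneg (b i)))]
    have hDle : D ≤ lam - a i := by
      have := hup i; simp only [hD]; linarith
    exact div_le_div_of_nonneg_left
      (mul_nonneg habs.le (mul_nonneg (hA0 i) (sq_nonneg _))) hD0 hDle
  -- sum identity : ∑ a b c = t (lam - 1)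
  have hsum : ∑ i, a i * (b i * c i) = t * (lam - 1) := by
    have h0 : ∀ i, b i * c i * lam - a i * (b i * c i) = t * b i ^ 2 := by
      intro i
      have hk := key i
      linear_combination b i * hk
    have h1' : ∑ i, (b i * c i * lam - a i * (b i * c i)) = ∑ i, t * b i ^ 2 :=
      Finset.sum_congr rfl fun i _ => h0 i
    rw [Finset.sum_sub_distrib, ← Finset.sum_mul, hbc, ← Finset.mul_sum, hbb] at h1'
    linear_combination - h1' 
  -- bound
  have hbound : |∑ i, a i * (b i * c i)| ≤ |t| * δ / D := by
    calc |∑ i, a i * (b i * c i)| ≤ ∑ i, |a i * (b i * c i)| :=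
          Finset.abs_sum_le_sum_abs _ _
      _ ≤ ∑ i, |t| * (a i * b i ^ 2) / D := Finset.sum_le_sum fun i _ => hper i
      _ = |t| * δ / D := by
          rw [← habb, Finset.mul_sum, Finset.sum_div]
  rw [hsum, abs_mul, abs_of_pos (by linarith : (0:ℝ) < lam - 1)] at hbound
  have hmain : (lam - 1) * D ≤ δ := by
    have h3 : |t| * ((lam - 1) * D) ≤ |t| * δ := by
      have h5 := mul_le_mul_of_nonneg_right hbound hD0.le
      calc |t| * ((lam - 1) * D) = (|t| * (lam - 1)) * D := by ring
        _ ≤ (|t| * δ / D) * D := h5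
        _ = |t| * δ := by field_simp
    exact le_of_mul_le_mul_left h3 habs
  have hδd : δ ≤ d := hδ
  have hfin : (lam - 1) * (lam - tlam1) ≤ d := by
    have h4 : (lam - 1) * (lam - tlam1) ≤ (lam - 1) * D := by
      apply mul_le_mul_of_nonneg_left _ (by linarith : (0:ℝ) ≤ lam - 1)
      simp only [hD]; linarith
    linarith
  have hgoal : lam - tlam1 ≤ d / (tlam1 - 1) := by
    rw [le_div_iff₀ (by linarith : (0:ℝ) < tlam1 - 1)]
    nlinarith [hfin, mul_le_mul_of_nonneg_left (show tlam1 - 1 ≤ lam - 1 by linarith)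
      (le_of_lt (show (0:ℝ) < lam - tlam1 by linarith))]
  linarith


/-- **Appending one column: perturbation of the largest eigenvalue.**
If `λ₁` is the largest eigenvalue of `X_{T₀}X_{T₀}ᵗ`, `λ̃₁ ≥ λ₁`, `λ̃₁ > 1` and `j ∉ T₀`, then
`λ₁(X_{T₀}X_{T₀}ᵗ + X_jX_jᵗ) ≤ λ̃₁ + ε_{s₀,max}`. -/
theorem append_column_largest_eigenvalue_perturbation
    {n p : ℕ} (X : Matrix (Fin n) (Fin p) ℝ) (μ : ℝ) (s₀ : ℕ)
    (hcols : ∀ j, ∑ i, (X i j) ^ 2 = 1)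
    (hμ0 : 0 ≤ μ)
    (hcoh : ∀ k l, k ≠ l → |∑ i, X i k * X i l| ≤ μ)
    (T₀ : Finset (Fin p)) (hT₀ : T₀.card = s₀)
    (j : Fin p) (hj : j ∉ T₀)
    (lam1 tlam1 : ℝ)
    (hlam1 : IsGreatest
      (Set.range (Matrix.isHermitian_mul_conjTranspose_self (subCols X T₀)).eigenvalues) lam1)
    (htge : lam1 ≤ tlam1) (htgt : 1 < tlam1)
    (ε : ℝ)
    (hε : ε = (1 / 2) * (((s₀ : ℝ) ^ 3 * μ ^ 2 * opNorm (subCols X T₀) ^ 2 +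
        4 * ((s₀ : ℝ) * Real.sqrt s₀) * μ * opNorm (subCols X T₀) * tlam1) /
      (2 * (tlam1 - 1)))) :
    kthLargestEig (pertM_isHermitian X T₀ (fun i => X i j)) 1 ≤ tlam1 + ε := by
  classical
  set B := subCols X T₀ with hB
  set N := opNorm (subCols X T₀) with hN
  have hN0 : (0:ℝ) ≤ N := norm_nonneg _
  have hε0 : 0 ≤ ε := by
    rw [hε]
    apply mul_nonneg (by norm_num)
    apply div_nonneg _ (by linarith)
    apply add_nonneg
    · have : (0:ℝ) ≤ (s₀:ℝ)^3 * μ^2 := mul_nonneg (by positivity) (sq_nonneg μ)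
      exact mul_nonneg this (sq_nonneg _)
    · have h1 : (0:ℝ) ≤ 4 * ((s₀:ℝ) * Real.sqrt s₀) := by positivity
      have h2 : (0:ℝ) ≤ 4 * ((s₀:ℝ) * Real.sqrt s₀) * μ := mul_nonneg h1 hμ0
      have h3 : (0:ℝ) ≤ 4 * ((s₀:ℝ) * Real.sqrt s₀) * μ * N := mul_nonneg h2 hN0
      exact mul_nonneg h3 (by linarith)
  -- the coherence bound on vᵗ A v
  have hδd : ∑ k, (fun i => X i j) k * ((B * Bᴴ) *ᵥ (fun i => X i j)) k ≤ (s₀:ℝ) * μ := by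
    set v : Fin n → ℝ := fun i => X i j with hv
    set q : {x // x ∈ T₀} → ℝ := fun τ => ∑ i, X i (τ : Fin p) * X i j with hq
    have hw : ∀ τ : {x // x ∈ T₀}, (Bᴴ *ᵥ v) τ = q τ := by
      intro τ
      simp only [Matrix.mulVec, dotProduct, Matrix.conjTranspose_apply, star_trivial,
        hq, hv, hB, subCols, Matrix.submatrix_apply, id]
    have hδsum : ∑ k, v k * ((B * Bᴴ) *ᵥ v) k = ∑ τ, q τ ^ 2 := by
      calc ∑ k, v k * ((B * Bᴴ) *ᵥ v) k
          = ∑ k, v k * (B *ᵥ (Bᴴ *ᵥ v)) k := by rw [← Matrix.mulVec_mulVec]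
        _ = ∑ k, ∑ τ, v k * (B k τ * q τ) := by
            refine Finset.sum_congr rfl fun k _ => ?_
            rw [show Bᴴ *ᵥ v = q from funext hw]
            simp only [Matrix.mulVec, dotProduct, Finset.mul_sum]
        _ = ∑ τ, (∑ k, B k τ * v k) * q τ := by
            rw [Finset.sum_comm]
            refine Finset.sum_congr rfl fun τ _ => ?_
            rw [Finset.sum_mul]
            exact Finset.sum_congr rfl fun k _ => by ring
        _ = ∑ τ, q τ ^ 2 := by
            refine Finset.sum_congr rfl fun τ _ => ?_
            have hbv : ∑ k, B k τ * v k = q τ := by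
              simp only [hq, hv, hB, subCols, Matrix.submatrix_apply, id]
            rw [hbv]; ring
    have hq1 : ∀ τ : {x // x ∈ T₀}, q τ ^ 2 ≤ μ := by
      intro τ
      have hne : (τ : Fin p) ≠ j := fun h => hj (h ▸ τ.2)
      have h1 := hcoh (τ : Fin p) j hne
      have h2 : q τ ^ 2 ≤ 1 := by
        have hcs := Finset.sum_mul_sq_le_sq_mul_sq Finset.univ
          (fun i => X i (τ : Fin p)) (fun i => X i j)
        rw [hcols, hcols, mul_one] at hcs
        simpa [hq] using hcs
      have habs1 : |q τ| ≤ 1 := (sq_le_one_iff_abs_le_one _).mp h2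
      calc q τ ^ 2 = |q τ| * |q τ| := by rw [sq, ← abs_mul_abs_self]
        _ ≤ μ * 1 := mul_le_mul (by simpa [hq] using h1) habs1 (abs_nonneg _) hμ0
        _ = μ := mul_one μ
    calc ∑ k, v k * ((B * Bᴴ) *ᵥ v) k = ∑ τ, q τ ^ 2 := hδsum
      _ ≤ ∑ _τ : {x // x ∈ T₀}, μ := Finset.sum_le_sum fun τ _ => hq1 τ
      _ = (T₀.card : ℝ) * μ := by
          rw [Finset.sum_const, Finset.card_univ, Fintype.card_coe, nsmul_eq_mul]
      _ = (s₀ : ℝ) * μ := by rw [hT₀]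
  -- eigenvalue bound from the secular lemma
  have hall : ∀ i, (pertM_isHermitian X T₀ (fun i => X i j)).eigenvalues i
      ≤ tlam1 + (s₀ : ℝ) * μ / (tlam1 - 1) := by
    intro i
    exact secular_bound (Matrix.isHermitian_mul_conjTranspose_self B)
      (Matrix.eigenvalues_self_mul_conjTranspose_nonneg B)
      (hcols j) (pertM_isHermitian X T₀ (fun i => X i j)) i
      (fun i => hlam1.2 ⟨i, rfl⟩) htge htgt hδd
      (mul_nonneg (by positivity) hμ0)
  -- compare the two bounds
  have hcmp : (s₀ : ℝ) * μ / (tlam1 - 1) ≤ ε := by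
    rcases Nat.eq_zero_or_pos s₀ with h0 | h0
    · simp only [h0, Nat.cast_zero, zero_mul, zero_div]
      exact hε0
    · have hs1 : (1:ℝ) ≤ (s₀:ℝ) := by exact_mod_cast h0
      have hsq : (1:ℝ) ≤ Real.sqrt s₀ := by
        rw [show (1:ℝ) = Real.sqrt 1 from (Real.sqrt_one).symm]
        exact Real.sqrt_le_sqrt hs1
      have hne : T₀.Nonempty := Finset.card_pos.mp (by rw [hT₀]; exact h0)
      have hN1 : 1 ≤ N := one_le_opNorm_subCols X hcols hne
      have hNt : (1:ℝ) ≤ N * tlam1 := by nlinarith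
      have hA1 : (1:ℝ) ≤ Real.sqrt s₀ * (N * tlam1) := by nlinarith
      have h2' : 4 * ((s₀:ℝ) * μ) * 1 ≤ 4 * ((s₀:ℝ) * μ) * (Real.sqrt s₀ * (N * tlam1)) := by
        apply mul_le_mul_of_nonneg_left hA1
        have : (0:ℝ) ≤ (s₀:ℝ) * μ := mul_nonneg (by positivity) hμ0
        linarith
      have key4 : 4 * ((s₀:ℝ) * μ) ≤ (s₀:ℝ)^3 * μ^2 * N^2
          + 4 * ((s₀:ℝ) * Real.sqrt s₀) * μ * N * tlam1 := by
        have hfst : (0:ℝ) ≤ (s₀:ℝ)^3 * μ^2 * N^2 :=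
          mul_nonneg (mul_nonneg (by positivity) (sq_nonneg μ)) (sq_nonneg N)
        nlinarith [h2']
      have hεeq : ε = ((s₀:ℝ)^3 * μ^2 * N^2
          + 4 * ((s₀:ℝ) * Real.sqrt s₀) * μ * N * tlam1) / (4 * (tlam1 - 1)) := by
        have hd : tlam1 - 1 ≠ 0 := by linarith
        rw [hε]
        field_simp
        ring_nf
      rw [hεeq, div_le_div_iff₀ (by linarith) (by linarith)]
      nlinarith [key4, htgt]
  have hfin : ∀ i, (pertM_isHermitian X T₀ (fun i => X i j)).eigenvalues i ≤ tlam1 + ε :=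
    fun i => le_trans (hall i) (by linarith)
  exact kthLargestEig_le _ (by linarith) hfin 1
end

section
/- Let X ∈ ℝ^{n×p} have ℓ2-normalized columns and coherence μ. Let T₀ ⊆ {1,…,p} with |T₀| = s₀, let λ₁ ≥ ⋯ ≥ λ_{s₀} be the eigenvalues of X_{T₀}ᵗX_{T₀}, and let λ̃₁ ≥ λ₁ and 0 < λ̃_{s₀} ≤ λ_{s₀}. Let T₁ ⊆ {1,…,p} with |T₁| = s₁ and T₀ ∩ T₁ = ∅, and let η ∈ (0,1). Define ε_min = (1/4)·( (s₀³·μ²·η² + 4·s₀^{3/2}·μ·η²) / (1 − s₀·μ² − η) ) and ε_max = (1/4)·( ((s₀+s₁)³·μ²·(2−η)² + 4·(s₀+s₁)^{3/2}·μ·(2−η)²) / (λ̃₁ − 1) ). Assume: (1) 1 − (s₀+s₁)·μ > λ̃_{s₀} > η; (2) 1 < λ̃₁ < 2 − η; (3) s₁ < min( (λ̃_{s₀} − η)/ε_min , (2 − η − λ̃₁)/ε_max ). Then the smallest eigenvalue of X_{T₀∪T₁}ᵗX_{T₀∪T₁} satisfies λ_{s₀+s₁}(X_{T₀∪T₁}ᵗX_{T₀∪T₁})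 ≥ λ̃_{s₀} − s₁·ε_min, and the largest eigenvalue satisfies λ₁(X_{T₀∪T₁}ᵗX_{T₀∪T₁}) ≤ λ̃₁ + s₁·ε_max. -/
open Matrix

/-- The Gram matrix `X_Tᵗ X_T`. -/
noncomputable def gram {n p : ℕ} (X : Matrix (Fin n) (Fin p) ℝ) (T : Finset (Fin p)) :
    Matrix {j // j ∈ T} {j // j ∈ T} ℝ :=
  (subCols X T)ᴴ * subCols X T

theorem gram_isHermitian {n p : ℕ} (X : Matrix (Fin n) (Fin p) ℝ) (T : Finset (Fin p)) :
    (gram X T).IsHermitian :=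
  Matrix.isHermitian_conjTranspose_mul_self _

lemma gram_entry {n p : ℕ} (X : Matrix (Fin n) (Fin p) ℝ) (T : Finset (Fin p))
    (k l : {j // j ∈ T}) : gram X T k l = ∑ i, X i k * X i l := by
  simp [_root_.gram, subCols, Matrix.mul_apply, Matrix.conjTranspose_apply]

lemma hasEig {m : Type*} [Fintype m] [DecidableEq m] {A : Matrix m m ℝ} (hA : A.IsHermitian)
    (i : m) : Module.End.HasEigenvalue (Matrix.toLin' A) (hA.eigenvalues i) := by
  apply Module.End.hasEigenvalue_of_hasEigenvector
    (x := (⇑(hA.eigenvectorBasis i) : m → ℝ))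
  constructor
  · rw [Module.End.mem_eigenspace_iff, Matrix.toLin'_apply]
    exact hA.mulVec_eigenvectorBasis i
  · have hne := hA.eigenvectorBasis.toBasis.ne_zero i
    rw [OrthonormalBasis.coe_toBasis] at hne
    intro hv
    apply hne
    ext j
    exact congrFun hv j

lemma eig_near_one {n p : ℕ} (X : Matrix (Fin n) (Fin p) ℝ) (μ : ℝ)
    (hcols : ∀ j, ∑ i, (X i j) ^ 2 = 1)
    (hcoh : ∀ k l, k ≠ l → |∑ i, X i k * X i l| ≤ μ)
    (S : Finset (Fin p)) (i : {j // j ∈ S}) :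
    |(gram_isHermitian X S).eigenvalues i - 1| ≤ ((S.card : ℝ) - 1) * μ := by
  obtain ⟨k, hk⟩ := eigenvalue_mem_ball (hasEig (gram_isHermitian X S) i)
  rw [Metric.mem_closedBall, Real.dist_eq] at hk
  have hdiag : gram X S k k = 1 := by
    rw [gram_entry]; simpa [pow_two] using hcols k
  have hcard : 1 ≤ S.card := by
    have : 0 < Fintype.card {j // j ∈ S} := Fintype.card_pos_iff.mpr ⟨k⟩
    rwa [Fintype.card_coe] at this
  have hsum : ∑ j ∈ Finset.univ.erase k, ‖gram X S k j‖ ≤ ((S.card : ℝ) - 1) * μ := by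
    calc ∑ j ∈ Finset.univ.erase k, ‖gram X S k j‖
        ≤ ∑ _j ∈ Finset.univ.erase k, μ := by
          apply Finset.sum_le_sum
          intro j hj
          rw [gram_entry, Real.norm_eq_abs]
          exact hcoh _ _ (fun hkj => (Finset.mem_erase.mp hj).1 (Subtype.ext hkj).symm)
      _ = (((Finset.univ.erase k).card : ℝ)) * μ := by
          rw [Finset.sum_const, nsmul_eq_mul]
      _ = ((S.card : ℝ) - 1) * μ := by
          rw [Finset.card_erase_of_mem (Finset.mem_univ _), Finset.card_univ, Fintype.card_coe,
            Nat.cast_sub hcard, Nat.cast_one]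
  rw [hdiag] at hk
  exact hk.trans hsum

/-- **Successive perturbations: appending `s₁` columns.**
If all eigenvalues of `X_{T₀}ᵗX_{T₀}` lie between `λ̃_{s₀}` and `λ̃₁`, and the assumptions
(1)–(3) hold, then the smallest eigenvalue of `X_{T₀∪T₁}ᵗX_{T₀∪T₁}` is at least
`λ̃_{s₀} − s₁ ε_min` and its largest eigenvalue is at most `λ̃₁ + s₁ ε_max`. -/
theorem successive_perturbation
    {n p : ℕ} (X : Matrix (Fin n) (Fin p) ℝ) (μ : ℝ) (s₀ s₁ : ℕ)
    (hcols : ∀ j, ∑ i, (X i j) ^ 2 = 1)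
    (hμ0 : 0 ≤ μ)
    (hcoh : ∀ k l, k ≠ l → |∑ i, X i k * X i l| ≤ μ)
    (T₀ T₁ : Finset (Fin p)) (hT₀ : T₀.card = s₀) (hT₁ : T₁.card = s₁)
    (hdisj : Disjoint T₀ T₁)
    (tlam1 tlams η : ℝ)
    (hη0 : 0 < η) (hη1 : η < 1)
    (hup : ∀ i, (gram_isHermitian X T₀).eigenvalues i ≤ tlam1)
    (hdown : ∀ i, tlams ≤ (gram_isHermitian X T₀).eigenvalues i)
    (htpos : 0 < tlams)
    (εmin εmax : ℝ)
    (hεmin : εmin = (1 / 4) * (((s₀ : ℝ) ^ 3 * μ ^ 2 * η ^ 2 +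
        4 * ((s₀ : ℝ) * Real.sqrt s₀) * μ * η ^ 2) / (1 - (s₀ : ℝ) * μ ^ 2 - η)))
    (hεmax : εmax = (1 / 4) * ((((s₀ : ℝ) + s₁) ^ 3 * μ ^ 2 * (2 - η) ^ 2 +
        4 * (((s₀ : ℝ) + s₁) * Real.sqrt ((s₀ : ℝ) + s₁)) * μ * (2 - η) ^ 2) / (tlam1 - 1)))
    (h1a : tlams < 1 - ((s₀ : ℝ) + s₁) * μ) (h1b : η < tlams)
    (h2a : 1 < tlam1) (h2b : tlam1 < 2 - η)
    (h3 : (s₁ : ℝ) < min ((tlams - η) / εmin) ((2 - η - tlam1) / εmax)) :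
    ∀ i, tlams - (s₁ : ℝ) * εmin ≤ (gram_isHermitian X (T₀ ∪ T₁)).eigenvalues i ∧
      (gram_isHermitian X (T₀ ∪ T₁)).eigenvalues i ≤ tlam1 + (s₁ : ℝ) * εmax := by
  have hεminpos : 0 < εmin := by
    have h3a : (s₁ : ℝ) < (tlams - η) / εmin := lt_of_lt_of_le h3 (min_le_left _ _)
    have hq : 0 < (tlams - η) / εmin := lt_of_le_of_lt (Nat.cast_nonneg s₁) h3a
    rcases div_pos_iff.mp hq with ⟨_, h⟩ | ⟨h, _⟩
    · exact h
    · linarith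
  have hεmaxpos : 0 < εmax := by
    have h3b : (s₁ : ℝ) < (2 - η - tlam1) / εmax := lt_of_lt_of_le h3 (min_le_right _ _)
    have hq : 0 < (2 - η - tlam1) / εmax := lt_of_le_of_lt (Nat.cast_nonneg s₁) h3b
    rcases div_pos_iff.mp hq with ⟨_, h⟩ | ⟨h, _⟩
    · exact h
    · linarith
  rcases Nat.eq_zero_or_pos s₁ with h0 | h1
  · -- s₁ = 0 : T₁ is empty, reduce to the hypotheses on T₀
    subst h0
    have hT1e : T₁ = ∅ := Finset.card_eq_zero.mp hT₁
    subst hT1e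
    rw [Finset.union_empty]
    intro i
    simp only [Nat.cast_zero, zero_mul, sub_zero, add_zero]
    exact ⟨hdown i, hup i⟩
  · intro i
    have hcard : (T₀ ∪ T₁).card = s₀ + s₁ := by
      rw [Finset.card_union_of_disjoint hdisj, hT₀, hT₁]
    have hG := eig_near_one X μ hcols hcoh (T₀ ∪ T₁) i
    rw [hcard] at hG
    have hG' := abs_le.mp hG
    set lam := (gram_isHermitian X (T₀ ∪ T₁)).eigenvalues i with hlam
    clear_value lam
    have hScast : ((s₀ + s₁ : ℕ) : ℝ) = (s₀ : ℝ) + s₁ := by push_cast; ring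
    rw [hScast] at hG'
    have hs₁1 : (1 : ℝ) ≤ (s₁ : ℝ) := by exact_mod_cast h1
    constructor
    · -- lower bound via Gershgorin
      have hnn : (0 : ℝ) ≤ (s₁ : ℝ) * εmin :=
        mul_nonneg (Nat.cast_nonneg s₁) hεminpos.le
      linarith [hG'.1]
    · -- upper bound
      set S : ℝ := (s₀ : ℝ) + s₁ with hS
      have hS1 : (1 : ℝ) ≤ S := by
        have : (0:ℝ) ≤ (s₀ : ℝ) := Nat.cast_nonneg s₀
        rw [hS]; linarith
      have hS0 : (0 : ℝ) ≤ S := by linarith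
      have hsqrt : (1 : ℝ) ≤ Real.sqrt S := by
        rw [show (1:ℝ) = Real.sqrt 1 by simp]
        exact Real.sqrt_le_sqrt hS1
      have hsq0 : (0 : ℝ) ≤ Real.sqrt S := Real.sqrt_nonneg S
      have hd : (0 : ℝ) < tlam1 - 1 := by linarith
      have hkey : S * Real.sqrt S * μ ≤ εmax := by
        have hnn : (0:ℝ) ≤ S * Real.sqrt S * μ :=
          mul_nonneg (mul_nonneg hS0 hsq0) hμ0
        have h1' : tlam1 - 1 ≤ (2 - η) ^ 2 := by nlinarith [sq_nonneg (1 - (2 - η))]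
        have hstep : 4 * (S * Real.sqrt S * μ) ≤
            (S ^ 3 * μ ^ 2 * (2 - η) ^ 2 + 4 * (S * Real.sqrt S) * μ * (2 - η) ^ 2) /
              (tlam1 - 1) := by
          rw [le_div_iff₀ hd]
          have hfirst : (0:ℝ) ≤ S ^ 3 * μ ^ 2 * (2 - η) ^ 2 :=
            mul_nonneg (mul_nonneg (pow_nonneg hS0 3) (sq_nonneg μ)) (sq_nonneg (2 - η))
          nlinarith [mul_nonneg hnn (sub_nonneg.mpr h1')]
        rw [hεmax]
        linarith
      have hSS : S ≤ S * Real.sqrt S := by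
        calc S = S * 1 := (mul_one S).symm
          _ ≤ S * Real.sqrt S := mul_le_mul_of_nonneg_left hsqrt hS0
      have hmu : S * μ ≤ S * Real.sqrt S * μ := mul_le_mul_of_nonneg_right hSS hμ0
      have hε1 : εmax ≤ (s₁ : ℝ) * εmax := le_mul_of_one_le_left hεmaxpos.le hs₁1
      linarith [hG'.2]
end

section
/- Let X ∈ ℝ^{n×p} have ℓ2-normalized columns and coherence μ. Let T₀ ⊆ {1,…,p} with |T₀| = s₀, let λ₁ ≥ ⋯ ≥ λ_{s₀} be the eigenvalues of X_{T₀}ᵗX_{T₀}, and let λ̃₁ ≥ λ₁ and 0 < λ̃_{s₀} ≤ λ_{s₀}. Let T₁ ⊆ {1,…,p} with |T₁| = 3·s₀ and T₀ ∩ T₁ = ∅. Define ε_min = (1/4)·( ((1/4)·s₀³·μ² + s₀^{3/2}·μ) / (1 − s₀·μ² − 1/2) ) and ε_max = (1/4)·( (144·s₀⁴·μ² + 32·s₀^{3/2}·μ·(3/2)²) / (λ̃₁ − 1) ). Assume: (1) 1 − 4·s₀·μ > λ̃_{s₀} > 1/2; (2) 1 < λ̃₁ < 3/2; (3) 3·s₀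 < min( (λ̃_{s₀} − 1/2)/ε_min , (3/2 − λ̃₁)/ε_max ); and (4) μ ≤ min{ 1/√(288·s₀^{5/2}·(2·s₀^{3/2}+1)), 1/√((3/2)·s₀⁴ + 6·s₀^{5/2} + 2·s₀) }. Then λ₁(X_{T₀∪T₁}ᵗX_{T₀∪T₁}) ≤ λ̃₁ + 3·s₀·ε_max and λ_{4s₀}(X_{T₀∪T₁}ᵗX_{T₀∪T₁}) ≥ λ̃_{s₀} − 3·s₀·ε_min. -/
open Matrix

/-- Gershgorin bound for eigenvalues of a real Hermitian matrix, via
`Matrix.IsHermitian.eigenvalues`. -/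
lemma herm_eigenvalue_gershgorin {ι : Type*} [Fintype ι] [DecidableEq ι]
    {A : Matrix ι ι ℝ} (hA : A.IsHermitian) (i : ι) :
    ∃ k, |hA.eigenvalues i - A k k| ≤ ∑ j ∈ Finset.univ.erase k, |A k j| := by
  have hev : Module.End.HasEigenvalue (Matrix.toLin' A) (hA.eigenvalues i) := by
    apply Module.End.hasEigenvalue_of_hasEigenvector
      (x := (hA.eigenvectorBasis i : ι → ℝ))
    refine ⟨Module.End.mem_eigenspace_iff.mpr ?_, ?_⟩
    · show A *ᵥ (hA.eigenvectorBasis i : ι → ℝ) = _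
      exact hA.mulVec_eigenvectorBasis i
    · intro h
      have h0 : hA.eigenvectorBasis i = 0 := by
        ext j; exact congrFun h j
      have := hA.eigenvectorBasis.toBasis.ne_zero i
      rw [OrthonormalBasis.coe_toBasis] at this
      exact this h0
  obtain ⟨k, hk⟩ := eigenvalue_mem_ball hev
  refine ⟨k, ?_⟩
  simpa [Real.dist_eq, Real.norm_eq_abs] using Metric.mem_closedBall.mp hk

set_option maxHeartbeats 1000000 in
/-- **Successive perturbations, specialization `η = 1/2`, `s₁ = 3 s₀`.**
Under the stated assumptions, `λ₁(X_{T₀∪T₁}ᵗX_{T₀∪T₁}) ≤ λ̃₁ + 3 s₀ ε_max` and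
`λ_{4s₀}(X_{T₀∪T₁}ᵗX_{T₀∪T₁}) ≥ λ̃_{s₀} − 3 s₀ ε_min`. -/
theorem successive_perturbation_specialized
    {n p : ℕ} (X : Matrix (Fin n) (Fin p) ℝ) (μ : ℝ) (s₀ : ℕ)
    (hcols : ∀ j, ∑ i, (X i j) ^ 2 = 1)
    (hμ0 : 0 ≤ μ)
    (hcoh : ∀ k l, k ≠ l → |∑ i, X i k * X i l| ≤ μ)
    (T₀ T₁ : Finset (Fin p)) (hT₀ : T₀.card = s₀) (hT₁ : T₁.card = 3 * s₀)
    (hdisj : Disjoint T₀ T₁)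
    (tlam1 tlams : ℝ)
    (hup : ∀ i, (gram_isHermitian X T₀).eigenvalues i ≤ tlam1)
    (hdown : ∀ i, tlams ≤ (gram_isHermitian X T₀).eigenvalues i)
    (htpos : 0 < tlams)
    (εmin εmax : ℝ)
    (hεmin : εmin = (1 / 4) * (((1 / 4) * (s₀ : ℝ) ^ 3 * μ ^ 2 +
        (s₀ : ℝ) * Real.sqrt s₀ * μ) / (1 - (s₀ : ℝ) * μ ^ 2 - 1 / 2)))
    (hεmax : εmax = (1 / 4) * ((144 * (s₀ : ℝ) ^ 4 * μ ^ 2 +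
        32 * ((s₀ : ℝ) * Real.sqrt s₀) * μ * (3 / 2) ^ 2) / (tlam1 - 1)))
    (h1a : tlams < 1 - 4 * (s₀ : ℝ) * μ) (h1b : (1 : ℝ) / 2 < tlams)
    (h2a : 1 < tlam1) (h2b : tlam1 < 3 / 2)
    (h3 : 3 * (s₀ : ℝ) < min ((tlams - 1 / 2) / εmin) ((3 / 2 - tlam1) / εmax))
    (hμsmall : μ ≤ min
      (1 / Real.sqrt (288 * ((s₀ : ℝ) ^ 2 * Real.sqrt s₀) * (2 * ((s₀ : ℝ) * Real.sqrt s₀) + 1)))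
      (1 / Real.sqrt ((3 / 2) * (s₀ : ℝ) ^ 4 + 6 * ((s₀ : ℝ) ^ 2 * Real.sqrt s₀) + 2 * s₀))) :
    ∀ i, tlams - 3 * (s₀ : ℝ) * εmin ≤ (gram_isHermitian X (T₀ ∪ T₁)).eigenvalues i ∧
      (gram_isHermitian X (T₀ ∪ T₁)).eigenvalues i ≤ tlam1 + 3 * (s₀ : ℝ) * εmax := by
  intro i
  -- basic numerology
  have hcardU : (T₀ ∪ T₁).card = 4 * s₀ := by
    rw [Finset.card_union_of_disjoint hdisj, hT₀, hT₁]; ring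
  have hs₀pos : 1 ≤ s₀ := by
    have h0 : 0 < (T₀ ∪ T₁).card := Finset.card_pos.mpr ⟨i.1, i.2⟩
    omega
  have hs : (1 : ℝ) ≤ (s₀ : ℝ) := by exact_mod_cast hs₀pos
  have hsq : (1 : ℝ) ≤ Real.sqrt s₀ := Real.one_le_sqrt.mpr hs
  -- entries of the Gram matrix
  have hentry : ∀ a b : {j // j ∈ T₀ ∪ T₁},
      gram X (T₀ ∪ T₁) a b = ∑ t, X t (a : Fin p) * X t (b : Fin p) := by
    intro a b
    simp [_root_.gram, subCols, Matrix.mul_apply, Matrix.conjTranspose_apply, Matrix.submatrix_apply]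
  have hdiag : ∀ a : {j // j ∈ T₀ ∪ T₁}, gram X (T₀ ∪ T₁) a a = 1 := by
    intro a
    rw [hentry]
    simpa [pow_two] using hcols (a : Fin p)
  -- Gershgorin
  obtain ⟨k, hk⟩ := herm_eigenvalue_gershgorin (gram_isHermitian X (T₀ ∪ T₁)) i
  rw [hdiag k] at hk
  have hsum : ∑ j ∈ Finset.univ.erase k, |gram X (T₀ ∪ T₁) k j| ≤ 4 * (s₀ : ℝ) * μ := by
    calc ∑ j ∈ Finset.univ.erase k, |gram X (T₀ ∪ T₁) k j|
        ≤ ∑ _j ∈ Finset.univ.erase k, μ := by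
          refine Finset.sum_le_sum fun j hj => ?_
          rw [hentry]
          exact hcoh _ _ (fun h => (Finset.ne_of_mem_erase hj) (Subtype.ext h.symm))
      _ = ((Finset.univ.erase k).card : ℝ) * μ := by
          rw [Finset.sum_const, nsmul_eq_mul]
      _ ≤ 4 * (s₀ : ℝ) * μ := by
          refine mul_le_mul_of_nonneg_right ?_ hμ0
          have hle : (Finset.univ.erase k).card ≤ 4 * s₀ := by
            calc (Finset.univ.erase k).card ≤ Finset.univ.card := Finset.card_erase_le.trans le_rfl
              _ = Fintype.card {j // j ∈ T₀ ∪ T₁} := rfl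
              _ = 4 * s₀ := by rw [Fintype.card_coe, hcardU]
          exact_mod_cast hle
  have hball : |(gram_isHermitian X (T₀ ∪ T₁)).eigenvalues i - 1| ≤ 4 * (s₀ : ℝ) * μ :=
    hk.trans hsum
  rw [abs_sub_le_iff] at hball
  -- εmin ≥ 0
  have hεmin0 : 0 ≤ εmin := by
    have hD : μ ≤ 1 / Real.sqrt ((3 / 2) * (s₀ : ℝ) ^ 4 + 6 * ((s₀ : ℝ) ^ 2 * Real.sqrt s₀)
        + 2 * s₀) := hμsmall.trans (min_le_right _ _)
    set D : ℝ := (3 / 2) * (s₀ : ℝ) ^ 4 + 6 * ((s₀ : ℝ) ^ 2 * Real.sqrt s₀) + 2 * s₀ with hDdef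
    have hDbig : 2 * (s₀ : ℝ) + 1 ≤ D := by
      have h1 : (1 : ℝ) ≤ (s₀ : ℝ) ^ 4 := one_le_pow₀ hs
      have h2 : (0 : ℝ) ≤ 6 * ((s₀ : ℝ) ^ 2 * Real.sqrt s₀) := by positivity
      rw [hDdef]; nlinarith
    have hDpos : (0 : ℝ) < D := by nlinarith [hDbig, hs]
    have hμ2 : μ ^ 2 ≤ 1 / D := by
      have := pow_le_pow_left₀ hμ0 hD 2
      rwa [div_pow, one_pow, Real.sq_sqrt hDpos.le] at this
    have hsd : (s₀ : ℝ) * μ ^ 2 < 1 / 2 := by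
      have : (s₀ : ℝ) * μ ^ 2 ≤ (s₀ : ℝ) / D := by
        rw [div_eq_mul_one_div]
        exact mul_le_mul_of_nonneg_left hμ2 (by positivity)
      have h2 : (s₀ : ℝ) / D < 1 / 2 := by
        rw [div_lt_div_iff₀ hDpos (by norm_num)]
        nlinarith
      linarith
    rw [hεmin]
    apply mul_nonneg (by norm_num)
    apply div_nonneg
    · positivity
    · linarith
  -- εmax lower bound
  have hc : (0 : ℝ) < tlam1 - 1 := by linarith
  have hεmax_ge : 36 * (s₀ : ℝ) * μ ≤ εmax := by
    rw [hεmax]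
    have h1 : 144 * (s₀ : ℝ) * μ ≤ (144 * (s₀ : ℝ) ^ 4 * μ ^ 2 +
        32 * ((s₀ : ℝ) * Real.sqrt s₀) * μ * (3 / 2) ^ 2) / (tlam1 - 1) := by
      rw [le_div_iff₀ hc]
      have hsq' : (0 : ℝ) ≤ 144 * (s₀:ℝ)^4 * μ^2 := by positivity
      have hsμ : (0:ℝ) ≤ (s₀ : ℝ) * μ := mul_nonneg (Nat.cast_nonneg s₀) hμ0
      have hss : (s₀ : ℝ) * μ ≤ (s₀ : ℝ) * Real.sqrt s₀ * μ := by
        have h1 : (s₀ : ℝ) ≤ (s₀ : ℝ) * Real.sqrt s₀ :=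
          le_mul_of_one_le_right (Nat.cast_nonneg s₀) hsq
        exact mul_le_mul_of_nonneg_right h1 hμ0
      have hhalf : 144 * ((s₀:ℝ) * μ) * (tlam1 - 1) ≤ 72 * ((s₀:ℝ) * μ) := by
        nlinarith [mul_nonneg hsμ (by linarith : (0:ℝ) ≤ 3/2 - tlam1)]
      nlinarith [hss, hsq', hhalf]
    linarith
  have hεmax0 : 0 ≤ εmax := le_trans (by positivity) hεmax_ge
  constructor
  · have h3ε : 0 ≤ 3 * (s₀ : ℝ) * εmin := by positivity
    linarith [hball.2]
  · have : 4 * (s₀ : ℝ) * μ ≤ 3 * (s₀ : ℝ) * εmax := by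
      have h1 : εmax ≤ (s₀ : ℝ) * εmax := le_mul_of_one_le_left hεmax0 hs
      nlinarith [mul_nonneg (Nat.cast_nonneg s₀ : (0:ℝ) ≤ s₀) hμ0]
    linarith [hball.1]
end

section
/- Let X ∈ ℝ^{n×p} and let T, T' ⊆ {1,…,p} be disjoint subsets with |T| = 2·s₀ and |T'| = 2·s₀. Suppose that every eigenvalue of X_{T∪T'}ᵗX_{T∪T'} lies in the interval [a, b] with 0 ≤ a ≤ b. Then for all vectors g, h ∈ ℝ^p, |⟨X_T g_T, X_{T'} h_{T'}⟩| ≤ ((b − a)/2)·‖g_T‖₂·‖h_{T'}‖₂. In particular, under the hypotheses of the 4s₀-column eigenvalue corollary with lower bound a = λ_{s₀} − 3·s₀·ε_min and upper bound b = λ₁ + 3·s₀·ε_max, one gets |⟨X_T g_T, X_{T'} h_{T'}⟩| ≤ (λ₁ − λ_{s₀} + 3·s₀·(ε_max + ε_min))·‖g_T‖₂·‖h_{T'}‖₂. -/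
open Matrix

lemma quad_bounds {m : Type*} [Fintype m] [DecidableEq m] {A : Matrix m m ℝ}
    (hA : A.IsHermitian) {a b : ℝ}
    (hab : ∀ i, a ≤ hA.eigenvalues i ∧ hA.eigenvalues i ≤ b) (w : m → ℝ) :
    a * (w ⬝ᵥ w) ≤ w ⬝ᵥ A *ᵥ w ∧ w ⬝ᵥ A *ᵥ w ≤ b * (w ⬝ᵥ w) := by
  set U : Matrix m m ℝ := (hA.eigenvectorUnitary : Matrix m m ℝ) with hUdef
  set y : m → ℝ := w ᵥ* U with hydef
  have hstar : (star (hA.eigenvectorUnitary : Matrix m m ℝ)) *ᵥ w = y := by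
    rw [hydef]
    rw [show (star (hA.eigenvectorUnitary : Matrix m m ℝ)) = Uᵀ from rfl]
    rw [Matrix.mulVec_transpose]
  have hq : w ⬝ᵥ A *ᵥ w = ∑ i, hA.eigenvalues i * y i ^ 2 := by
    conv_lhs => rw [hA.spectral_theorem, Unitary.conjStarAlgAut_apply]
    rw [← Matrix.mulVec_mulVec, ← Matrix.mulVec_mulVec, hstar,
      Matrix.dotProduct_mulVec]
    simp only [← hydef, dotProduct, Matrix.mulVec_diagonal]
    congr 1; ext i; simp [RCLike.ofReal]; ring
  have hnorm : w ⬝ᵥ w = ∑ i, y i ^ 2 := by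
    have h1 : y ⬝ᵥ y = ∑ i, y i ^ 2 := by
      simp [dotProduct, sq]
    rw [← h1]
    conv_lhs => rw [show w ⬝ᵥ w = w ⬝ᵥ ((1 : Matrix m m ℝ) *ᵥ w) by rw [Matrix.one_mulVec]]
    have hUU : U * star U = 1 := Unitary.mul_star_self_of_mem hA.eigenvectorUnitary.2
    rw [← hUU, ← Matrix.mulVec_mulVec, Matrix.dotProduct_mulVec, hstar]
  constructor
  · rw [hq, hnorm, Finset.mul_sum]
    exact Finset.sum_le_sum fun i _ => mul_le_mul_of_nonneg_right (hab i).1 (sq_nonneg _)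
  · rw [hq, hnorm, Finset.mul_sum]
    exact Finset.sum_le_sum fun i _ => mul_le_mul_of_nonneg_right (hab i).2 (sq_nonneg _)

/-- **Bounding scalar products via the parallelogram law.**
If `T` and `T'` are disjoint subsets of cardinality `2 s₀` and all eigenvalues of
`X_{T∪T'}ᵗX_{T∪T'}` lie in `[a, b]` with `0 ≤ a ≤ b`, then for all `g, h ∈ ℝᵖ`,
`|⟨X_T g_T, X_{T'} h_{T'}⟩| ≤ ((b − a)/2) ‖g_T‖₂ ‖h_{T'}‖₂`. -/
theorem scalar_product_bound
    {n p : ℕ} (X : Matrix (Fin n) (Fin p) ℝ) (s₀ : ℕ)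
    (T T' : Finset (Fin p)) (hdisj : Disjoint T T')
    (hT : T.card = 2 * s₀) (hT' : T'.card = 2 * s₀)
    (a b : ℝ) (ha : 0 ≤ a) (hab : a ≤ b)
    (heig : ∀ i, a ≤ (gram_isHermitian X (T ∪ T')).eigenvalues i ∧
      (gram_isHermitian X (T ∪ T')).eigenvalues i ≤ b) :
    ∀ g h : Fin p → ℝ,
      |∑ i, (∑ j ∈ T, g j * X i j) * (∑ j ∈ T', h j * X i j)| ≤
        ((b - a) / 2) * Real.sqrt (∑ j ∈ T, g j ^ 2) * Real.sqrt (∑ j ∈ T', h j ^ 2) := by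
  classical
  set S := T ∪ T' with hS
  set M := subCols X S with hM
  -- quadratic form of the gram matrix
  have hgram : ∀ w : {j // j ∈ S} → ℝ,
      w ⬝ᵥ (gram X S) *ᵥ w = ∑ i, ((M *ᵥ w) i) ^ 2 := by
    intro w
    rw [_root_.gram, ← Matrix.mulVec_mulVec, Matrix.dotProduct_mulVec]
    rw [show (subCols X S)ᴴ = Mᵀ from rfl, Matrix.vecMul_transpose]
    simp [dotProduct, sq]; rfl
  -- evaluation of M *ᵥ (restricted vector)
  have heval : ∀ (c : Fin p → ℝ) (R : Finset (Fin p)), R ⊆ S → ∀ i,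
      (M *ᵥ (fun j => if (j : Fin p) ∈ R then c j else 0)) i = ∑ j ∈ R, c j * X i j := by
    intro c R hR i
    show ∑ j : {j // j ∈ S}, M i j * (if (j : Fin p) ∈ R then c j else 0) = _
    rw [show (∑ j : {j // j ∈ S}, M i j * (if (j : Fin p) ∈ R then c j else 0))
        = ∑ j : {j // j ∈ S}, (fun j' => X i j' * (if j' ∈ R then c j' else 0)) (j : Fin p)
        from rfl]
    rw [Finset.sum_coe_sort S (fun j' => X i j' * (if j' ∈ R then c j' else 0))]
    rw [show (∑ j ∈ S, X i j * (if j ∈ R then c j else 0))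
        = ∑ j ∈ S, (if j ∈ R then c j * X i j else 0) by
      apply Finset.sum_congr rfl; intro j _; split <;> ring]
    rw [Finset.sum_ite_mem, Finset.inter_eq_right.mpr hR]
  -- norms of restricted combination vectors
  have hnormw : ∀ (g h : Fin p → ℝ) (e : ℝ),
      (fun j : {j // j ∈ S} => (if (j : Fin p) ∈ T then g j else 0)
          + e * (if (j : Fin p) ∈ T' then h j else 0)) ⬝ᵥ
      (fun j : {j // j ∈ S} => (if (j : Fin p) ∈ T then g j else 0)
          + e * (if (j : Fin p) ∈ T' then h j else 0))
      = (∑ j ∈ T, g j ^ 2) + e ^ 2 * ∑ j ∈ T', h j ^ 2 := by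
    intro g h e
    show (∑ j : {j // j ∈ S}, (fun j' => ((if j' ∈ T then g j' else 0)
        + e * (if j' ∈ T' then h j' else 0)) *
        ((if j' ∈ T then g j' else 0) + e * (if j' ∈ T' then h j' else 0))) (j : Fin p)) = _
    rw [Finset.sum_coe_sort S (fun j' => ((if j' ∈ T then g j' else 0)
        + e * (if j' ∈ T' then h j' else 0)) *
        ((if j' ∈ T then g j' else 0) + e * (if j' ∈ T' then h j' else 0)))]
    have heq : ∀ j ∈ S, ((if j ∈ T then g j else 0) + e * (if j ∈ T' then h j else 0)) *
        ((if j ∈ T then g j else 0) + e * (if j ∈ T' then h j else 0))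
        = (if j ∈ T then g j ^ 2 else 0) + e ^ 2 * (if j ∈ T' then h j ^ 2 else 0) := by
      intro j _
      by_cases hj : j ∈ T
      · have hj' : j ∉ T' := Finset.disjoint_left.mp hdisj hj
        simp only [hj, hj', if_true, if_false, mul_zero, add_zero]; ring
      · by_cases hj' : j ∈ T' <;> simp only [hj, hj', if_true, if_false] <;> ring
    rw [Finset.sum_congr rfl heq, Finset.sum_add_distrib, Finset.sum_ite_mem,
      Finset.inter_eq_right.mpr Finset.subset_union_left, ← Finset.mul_sum,
      Finset.sum_ite_mem, Finset.inter_eq_right.mpr Finset.subset_union_right]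
  -- decomposition of the combination vectors under M
  have hMpm : ∀ (g h : Fin p → ℝ) (e : ℝ) (i : Fin n),
      (M *ᵥ (fun j : {j // j ∈ S} => (if (j : Fin p) ∈ T then g j else 0)
          + e * (if (j : Fin p) ∈ T' then h j else 0))) i
      = (∑ j ∈ T, g j * X i j) + e * (∑ j ∈ T', h j * X i j) := by
    intro g h e i
    have : (fun j : {j // j ∈ S} => (if (j : Fin p) ∈ T then g j else 0)
          + e * (if (j : Fin p) ∈ T' then h j else 0))
        = (fun j : {j // j ∈ S} => if (j : Fin p) ∈ T then g j else 0)
          + e • (fun j : {j // j ∈ S} => if (j : Fin p) ∈ T' then h j else 0) := rfl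
    rw [this, Matrix.mulVec_add, Matrix.mulVec_smul]
    simp only [Pi.add_apply, Pi.smul_apply, smul_eq_mul]
    rw [heval g T Finset.subset_union_left i, heval h T' Finset.subset_union_right i]
  -- key bound via parallelogram law
  have key : ∀ g h : Fin p → ℝ,
      |∑ i, (∑ j ∈ T, g j * X i j) * (∑ j ∈ T', h j * X i j)| ≤
        ((b - a) / 4) * ((∑ j ∈ T, g j ^ 2) + (∑ j ∈ T', h j ^ 2)) := by
    intro g h
    set G := ∑ j ∈ T, g j ^ 2 with hG
    set H := ∑ j ∈ T', h j ^ 2 with hH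
    set u : Fin n → ℝ := fun i => ∑ j ∈ T, g j * X i j with hu
    set v : Fin n → ℝ := fun i => ∑ j ∈ T', h j * X i j with hv
    have hGH0 : 0 ≤ G + H :=
      add_nonneg (Finset.sum_nonneg fun j _ => sq_nonneg _)
        (Finset.sum_nonneg fun j _ => sq_nonneg _)
    have hqp := quad_bounds (gram_isHermitian X S) heig
      (fun j : {j // j ∈ S} => (if (j : Fin p) ∈ T then g j else 0)
          + (1 : ℝ) * (if (j : Fin p) ∈ T' then h j else 0))
    have hqm := quad_bounds (gram_isHermitian X S) heig
      (fun j : {j // j ∈ S} => (if (j : Fin p) ∈ T then g j else 0)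
          + (-1 : ℝ) * (if (j : Fin p) ∈ T' then h j else 0))
    rw [hgram, hnormw g h 1] at hqp
    rw [hgram, hnormw g h (-1)] at hqm
    have ep : (∑ i, ((M *ᵥ (fun j : {j // j ∈ S} => (if (j : Fin p) ∈ T then g j else 0)
          + (1 : ℝ) * (if (j : Fin p) ∈ T' then h j else 0))) i) ^ 2)
        = ∑ i, (u i + v i) ^ 2 :=
      Finset.sum_congr rfl fun i _ => by rw [hMpm g h 1 i]; ring_nf; rfl
    have em : (∑ i, ((M *ᵥ (fun j : {j // j ∈ S} => (if (j : Fin p) ∈ T then g j else 0)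
          + (-1 : ℝ) * (if (j : Fin p) ∈ T' then h j else 0))) i) ^ 2)
        = ∑ i, (u i - v i) ^ 2 :=
      Finset.sum_congr rfl fun i _ => by rw [hMpm g h (-1) i]; ring_nf; rfl
    rw [ep] at hqp
    rw [em] at hqm
    have hpar : (∑ i, (u i + v i) ^ 2) - (∑ i, (u i - v i) ^ 2) = 4 * ∑ i, u i * v i := by
      rw [← Finset.sum_sub_distrib, Finset.mul_sum]
      exact Finset.sum_congr rfl fun i _ => by ring
    rw [abs_le]
    constructor <;> nlinarith [hqp.1, hqp.2, hqm.1, hqm.2]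
  -- scaling argument
  intro g h
  set G := ∑ j ∈ T, g j ^ 2 with hG
  set H := ∑ j ∈ T', h j ^ 2 with hH
  have hG0 : 0 ≤ G := Finset.sum_nonneg fun j _ => sq_nonneg _
  have hH0 : 0 ≤ H := Finset.sum_nonneg fun j _ => sq_nonneg _
  rcases eq_or_lt_of_le hG0 with hGz | hGpos
  · have hg0 : ∀ j ∈ T, g j = 0 := by
      intro j hj
      have := (Finset.sum_eq_zero_iff_of_nonneg (fun j _ => sq_nonneg (g j))).mp hGz.symm j hj
      exact (pow_eq_zero_iff two_ne_zero).mp this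
    have hz : (∑ i, (∑ j ∈ T, g j * X i j) * (∑ j ∈ T', h j * X i j)) = 0 :=
      Finset.sum_eq_zero fun i _ => by
        rw [Finset.sum_eq_zero fun j hj => by rw [hg0 j hj, zero_mul], zero_mul]
    rw [hz, abs_zero]
    exact mul_nonneg (mul_nonneg (by linarith) (Real.sqrt_nonneg _)) (Real.sqrt_nonneg _)
  rcases eq_or_lt_of_le hH0 with hHz | hHpos
  · have hh0 : ∀ j ∈ T', h j = 0 := by
      intro j hj
      have := (Finset.sum_eq_zero_iff_of_nonneg (fun j _ => sq_nonneg (h j))).mp hHz.symm j hj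
      exact (pow_eq_zero_iff two_ne_zero).mp this
    have hz : (∑ i, (∑ j ∈ T, g j * X i j) * (∑ j ∈ T', h j * X i j)) = 0 :=
      Finset.sum_eq_zero fun i _ => by
        rw [show (∑ j ∈ T', h j * X i j) = 0 from
          Finset.sum_eq_zero fun j hj => by rw [hh0 j hj, zero_mul], mul_zero]
    rw [hz, abs_zero]
    exact mul_nonneg (mul_nonneg (by linarith) (Real.sqrt_nonneg _)) (Real.sqrt_nonneg _)
  -- main case : G, H > 0
  have hsG : 0 < Real.sqrt G := Real.sqrt_pos.mpr hGpos
  have hsH : 0 < Real.sqrt H := Real.sqrt_pos.mpr hHpos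
  set c : ℝ := Real.sqrt (Real.sqrt H / Real.sqrt G) with hc
  have hcpos : 0 < c := Real.sqrt_pos.mpr (div_pos hsH hsG)
  have hc2 : c ^ 2 = Real.sqrt H / Real.sqrt G := Real.sq_sqrt (le_of_lt (div_pos hsH hsG))
  have hkey := key (fun j => c * g j) (fun j => c⁻¹ * h j)
  have e1 : (∑ j ∈ T, (c * g j) ^ 2) = c ^ 2 * G := by
    rw [hG, Finset.mul_sum]; exact Finset.sum_congr rfl fun j _ => by ring
  have e2 : (∑ j ∈ T', (c⁻¹ * h j) ^ 2) = (c⁻¹) ^ 2 * H := by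
    rw [hH, Finset.mul_sum]; exact Finset.sum_congr rfl fun j _ => by ring
  have e3 : (∑ i, (∑ j ∈ T, (c * g j) * X i j) * (∑ j ∈ T', (c⁻¹ * h j) * X i j))
      = ∑ i, (∑ j ∈ T, g j * X i j) * (∑ j ∈ T', h j * X i j) := by
    refine Finset.sum_congr rfl fun i _ => ?_
    rw [show (∑ j ∈ T, (c * g j) * X i j) = c * ∑ j ∈ T, g j * X i j by
        rw [Finset.mul_sum]; exact Finset.sum_congr rfl fun j _ => by ring,
      show (∑ j ∈ T', (c⁻¹ * h j) * X i j) = c⁻¹ * ∑ j ∈ T', h j * X i j by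
        rw [Finset.mul_sum]; exact Finset.sum_congr rfl fun j _ => by ring]
    field_simp
  rw [e1, e2, e3] at hkey
  have e4 : ((b - a) / 4) * (c ^ 2 * G + (c⁻¹) ^ 2 * H)
      = ((b - a) / 2) * Real.sqrt G * Real.sqrt H := by
    have t1 : Real.sqrt H / Real.sqrt G * G = Real.sqrt H * Real.sqrt G := by
      rw [div_mul_eq_mul_div, mul_div_assoc, Real.div_sqrt]
    have t2 : (Real.sqrt H / Real.sqrt G)⁻¹ * H = Real.sqrt G * Real.sqrt H := by
      rw [inv_div, div_mul_eq_mul_div, mul_div_assoc, Real.div_sqrt]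
    rw [inv_pow, hc2, t1, t2]
    ring
  rw [e4] at hkey
  exact hkey
end

section
/- Let h ∈ ℝ^p, let T₀ ⊆ {1,…,p} with |T₀| = s₀ ≥ 1, and let T₁, T₂, …, T_J be the partition of T₀ᶜ obtained by taking T₁ as the indices of the s₀ largest entries of h on T₀ᶜ in absolute value, T₂ as the indices of the s₀ largest entries of h on (T₀∪T₁)ᶜ in absolute value, and so on (the last block possibly having fewer than s₀ elements). Then Σ_{j=2}^{J} ‖h_{T_j}‖₂ ≤ ‖h_{T₀ᶜ}‖₁ / √s₀. -/
attribute [local instance] Classical.propDecidable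

/-- **The shelling lemma.** Let `T 0, T 1, …, T (J-1)` (corresponding to `T₁, …, T_J` in the
usual notation) be the partition of `T₀ᶜ` obtained by greedily grouping the entries of `h`
outside `T₀` into blocks of size `s₀` in decreasing order of absolute value: the blocks are
pairwise disjoint, their union is `T₀ᶜ`, all blocks but possibly the last one have exactly
`s₀` elements (every block has at most `s₀`), and every entry of a later block is, in absolute
value, at most every entry of an earlier block. Then
`Σ_{j=2}^{J} ‖h_{T_j}‖₂ ≤ ‖h_{T₀ᶜ}‖₁ / √s₀`. -/
theorem shelling_lemma
    {p : ℕ} (h : Fin p → ℝ) (s₀ : ℕ) (hs₀ : 1 ≤ s₀)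
    (T₀ : Finset (Fin p)) (hT₀ : T₀.card = s₀)
    (J : ℕ) (hJ : 1 ≤ J) (T : Fin J → Finset (Fin p))
    (hdisj : ∀ i j : Fin J, i ≠ j → Disjoint (T i) (T j))
    (hunion : Finset.univ.biUnion T = T₀ᶜ)
    (hfull : ∀ j : Fin J, (j : ℕ) < J - 1 → (T j).card = s₀)
    (hsize : ∀ j : Fin J, (T j).card ≤ s₀)
    (horder : ∀ i j : Fin J, i < j → ∀ a ∈ T i, ∀ b ∈ T j, |h b| ≤ |h a|) :
    ∑ j ∈ Finset.univ.filter (fun j : Fin J => 1 ≤ (j : ℕ)),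
        Real.sqrt (∑ i ∈ T j, h i ^ 2) ≤
      (∑ i ∈ T₀ᶜ, |h i|) / Real.sqrt s₀ := by
  have hs0pos : (0:ℝ) < (s₀:ℝ) := by exact_mod_cast hs₀
  have hsqrtpos : 0 < Real.sqrt s₀ := Real.sqrt_pos.mpr hs0pos
  set S : Fin J → ℝ := fun j => ∑ i ∈ T j, |h i| with hSdef
  have hSnonneg : ∀ j, 0 ≤ S j := fun j => Finset.sum_nonneg fun i _ => abs_nonneg _
  set pr : Fin J → Fin J := fun j => ⟨(j:ℕ)-1, Nat.lt_of_le_of_lt (Nat.sub_le _ _) j.isLt⟩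
    with hprdef
  have key : ∀ j : Fin J, 1 ≤ (j:ℕ) →
      Real.sqrt (∑ i ∈ T j, h i ^ 2) ≤ S (pr j) / Real.sqrt s₀ := by
    intro j hj
    have hjlt := j.isLt
    have hcard : (T (pr j)).card = s₀ := hfull (pr j) (by simp [hprdef]; omega)
    have hlt : pr j < j := by simp [Fin.lt_def, hprdef]; omega
    have hb : ∀ b ∈ T j, |h b| ≤ S (pr j) / s₀ := by
      intro b hbmem
      rw [le_div_iff₀ hs0pos]
      calc |h b| * s₀ = ∑ _a ∈ T (pr j), |h b| := by
            rw [Finset.sum_const, hcard, nsmul_eq_mul, mul_comm]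
        _ ≤ ∑ a ∈ T (pr j), |h a| :=
            Finset.sum_le_sum fun a ha => horder (pr j) j hlt a ha b hbmem
    have h1 : ∑ i ∈ T j, h i ^ 2 ≤ (s₀:ℝ) * (S (pr j) / s₀)^2 := by
      calc ∑ i ∈ T j, h i ^ 2 ≤ ∑ _i ∈ T j, (S (pr j)/s₀)^2 :=
            Finset.sum_le_sum fun i hi => by
              rw [← sq_abs]
              exact pow_le_pow_left₀ (abs_nonneg _) (hb i hi) 2
        _ = ((T j).card : ℝ) * (S (pr j)/s₀)^2 := by
            rw [Finset.sum_const, nsmul_eq_mul]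
        _ ≤ (s₀:ℝ) * (S (pr j)/s₀)^2 := by
            have : ((T j).card : ℝ) ≤ (s₀:ℝ) := by exact_mod_cast hsize j
            exact mul_le_mul_of_nonneg_right this (sq_nonneg _)
    calc Real.sqrt (∑ i ∈ T j, h i ^ 2) ≤ Real.sqrt ((s₀:ℝ) * (S (pr j) / s₀)^2) :=
          Real.sqrt_le_sqrt h1
      _ = Real.sqrt s₀ * (S (pr j) / s₀) := by
          rw [Real.sqrt_mul hs0pos.le, Real.sqrt_sq (div_nonneg (hSnonneg _) hs0pos.le)]
      _ = S (pr j) / Real.sqrt s₀ := by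
          rw [eq_div_iff hsqrtpos.ne']
          rw [mul_comm (Real.sqrt s₀), mul_assoc, Real.mul_self_sqrt hs0pos.le]
          field_simp
  have hsum : ∑ j ∈ Finset.univ.filter (fun j : Fin J => 1 ≤ (j : ℕ)), S (pr j)
      ≤ ∑ j, S j := by
    rw [← Finset.sum_image (f := S) (g := pr)
      (by intro x hx y hy hxy
          simp only [Finset.mem_coe, Finset.mem_filter] at hx hy
          apply Fin.ext
          have := congrArg Fin.val hxy
          simp [hprdef] at this
          omega)]
    exact Finset.sum_le_sum_of_subset_of_nonneg (Finset.subset_univ _)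
      fun j _ _ => hSnonneg j
  calc ∑ j ∈ Finset.univ.filter (fun j : Fin J => 1 ≤ (j : ℕ)),
        Real.sqrt (∑ i ∈ T j, h i ^ 2)
      ≤ ∑ j ∈ Finset.univ.filter (fun j : Fin J => 1 ≤ (j : ℕ)), S (pr j) / Real.sqrt s₀ :=
        Finset.sum_le_sum fun j hj => key j (Finset.mem_filter.mp hj).2
    _ = (∑ j ∈ Finset.univ.filter (fun j : Fin J => 1 ≤ (j : ℕ)), S (pr j)) / Real.sqrt s₀ := by
        rw [Finset.sum_div]
    _ ≤ (∑ j, S j) / Real.sqrt s₀ := by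
        gcongr
    _ = (∑ i ∈ T₀ᶜ, |h i|) / Real.sqrt s₀ := by
        rw [← hunion, Finset.sum_biUnion]
        intro i _ j _ hij
        exact hdisj i j hij
end
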